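/- arXiv:2201.02375 — 2 statements merged into one kernel-verified Lean document; each statement's English description precedes it below -/
import Mathlib

section
/- Let S be a finite semigroup containing a two-element subsemilattice {0,1} with 0·1 = 1·0 = 0, 0·0 = 0, 1·1 = 1. Let n > |S| + 1, k ∈ {1,...,n}, and let f : S^n → S have the property that every identification minor of f is a term function of S, and suppose f depends on its k-th argument. If moreover it is known (as in Mayr's lemma) that some identification minor f_{ℓm} with ℓ, m ≠ k depends on the k-th argument, then every identification minor f_{ij} with i ≠ k depends on the k-th argument. -/
/-- The product of a nonempty list of semigroup elements (head and tail). -/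
def sprod {S : Type} [Mul S] (a : S) (l : List S) : S :=
  l.foldl (· * ·) a

/-- `f` is an `n`-ary term function of the semigroup `S`, i.e. it is induced by
a nonempty word `v :: l` in the variables. -/
def IsSGTermFun {S : Type} [Semigroup S] {n : ℕ} (f : (Fin n → S) → S) : Prop :=
  ∃ (v : Fin n) (l : List (Fin n)), ∀ x : Fin n → S, f x = sprod (x v) (l.map x)

/-- The identification minor `f_{ij}`: replace the `i`-th argument by the `j`-th. -/
def minor {S : Type} {n : ℕ} (f : (Fin n → S) → S) (i j : Fin n) :
    (Fin n → S) → S :=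
  fun x => f (Function.update x i (x j))

/-- `f` depends on its `k`-th argument. -/
def DependsOnArg {S : Type} {n : ℕ} (f : (Fin n → S) → S) (k : Fin n) : Prop :=
  ∃ a b : Fin n → S, (∀ j : Fin n, j ≠ k → a j = b j) ∧ f a ≠ f b

lemma sprod_eq_o {S : Type} [Semigroup S] {o : S} (hz4 : o * o = o) :
    ∀ (l : List S) (a : S), a = o → (∀ s ∈ l, s = o) → sprod a l = o := by
  intro l
  induction l with
  | nil => intro a ha _; exact ha
  | cons h t ih =>
      intro a ha H
      have hh : h = o := H h (List.mem_cons_self)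
      have : sprod a (h :: t) = sprod (a * h) t := rfl
      rw [this]
      exact ih (a * h) (by rw [ha, hh, hz4]) (fun s hs => H s (List.mem_cons_of_mem _ hs))

lemma sprod_eq_z {S : Type} [Semigroup S] {z o : S}
    (hz1 : z * o = z) (hz2 : o * z = z) (hz3 : z * z = z) (hz4 : o * o = o) :
    ∀ (l : List S) (a : S), (a = z ∨ a = o) → (∀ s ∈ l, s = z ∨ s = o) →
      (a = z ∨ z ∈ l) → sprod a l = z := by
  intro l
  induction l with
  | nil =>
      intro a _ _ h
      rcases h with h | h
      · exact h
      · simp at h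
  | cons h t ih =>
      intro a ha H hin
      have hh : h = z ∨ h = o := H h (List.mem_cons_self)
      have step : sprod a (h :: t) = sprod (a * h) t := rfl
      rw [step]
      apply ih (a * h)
      · rcases ha with ha | ha <;> rcases hh with hh | hh <;>
          simp [ha, hh, hz1, hz2, hz3, hz4]
      · exact fun s hs => H s (List.mem_cons_of_mem _ hs)
      · rcases hin with hin | hin
        · left; rcases hh with hh | hh <;> simp [hin, hh, hz1, hz3]
        · rcases List.mem_cons.mp hin with hin | hin
          · left; rcases ha with ha | ha <;> simp [ha, ← hin, hz2, hz3]
          · right; exact hin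

/-- Let `S` be a finite semigroup containing a two-element subsemilattice
`{z, o}` (with `z·o = o·z = z·z = z`, `o·o = o`).  Let `n > |S| + 1`,
`k ∈ {1,…,n}`, let every identification minor of `f : Sⁿ → S` be a term
function of `S`, and suppose `f` depends on its `k`-th argument.  If moreover
some identification minor `f_{ℓm}` with `ℓ, m ≠ k` depends on the `k`-th
argument, then every identification minor `f_{ij}` with `i ≠ k` depends on the
`k`-th argument. -/
theorem stmt_16 (S : Type) [Semigroup S] [Fintype S] (z o : S) (hzo : z ≠ o)
    (hz1 : z * o = z) (hz2 : o * z = z) (hz3 : z * z = z) (hz4 : o * o = o)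
    (n : ℕ) (hn : Fintype.card S + 1 < n) (k : Fin n)
    (f : (Fin n → S) → S)
    (hminor : ∀ i j : Fin n, i < j → IsSGTermFun (minor f i j))
    (hdep : DependsOnArg f k)
    (hlm : ∃ ℓ m : Fin n, ℓ < m ∧ ℓ ≠ k ∧ m ≠ k ∧ DependsOnArg (minor f ℓ m) k) :
    ∀ i j : Fin n, i < j → i ≠ k → DependsOnArg (minor f i j) k := by
  obtain ⟨ℓ, m, hℓm, hℓk, hmk, hdlm⟩ := hlm
  have hcardS : 2 ≤ Fintype.card S := Fintype.one_lt_card_iff_nontrivial.mpr ⟨z, o, hzo⟩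
  have hn4 : 4 ≤ n := by omega
  set co : Fin n → S := fun _ => o with hco
  set ao : Fin n → S := fun x => if x = k then z else o with hao
  have hao_vals : ∀ t, ao t = z ∨ ao t = o := by
    intro t; by_cases h : t = k <;> simp [hao, h]
  have hfixp : ∀ (x : Fin n → S) (p q : Fin n), x p = x q →
      Function.update x p (x q) = x := by
    intro x p q hx; funext t
    rcases eq_or_ne t p with rfl | ht
    · rw [Function.update_self]; exact hx.symm
    · rw [Function.update_of_ne ht]
  obtain ⟨v, l, hterm⟩ := hminor ℓ m hℓm
  have hfco : f co = o := by
    have h1 : minor f ℓ m co = f co := by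
      show f (Function.update co ℓ (co m)) = f co
      rw [hfixp co ℓ m rfl]
    rw [← h1, hterm]
    apply sprod_eq_o hz4
    · rfl
    · intro s hs; rw [List.mem_map] at hs; obtain ⟨t, _, rfl⟩ := hs; rfl
  have hkword : v = k ∨ k ∈ l := by
    by_contra hc
    push_neg at hc
    obtain ⟨x, y, hxy, hne⟩ := hdlm
    apply hne
    rw [hterm, hterm]
    have hv : x v = y v := hxy v hc.1
    have hl : l.map x = l.map y :=
      List.map_congr_left (fun t ht => hxy t (fun h => hc.2 (h ▸ ht)))
    rw [hv, hl]
  have hfao : f ao = z := by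
    have h1 : minor f ℓ m ao = f ao := by
      show f (Function.update ao ℓ (ao m)) = f ao
      rw [hfixp ao ℓ m (by simp [hao, hℓk, hmk])]
    rw [← h1, hterm]
    apply sprod_eq_z hz1 hz2 hz3 hz4
    · exact hao_vals v
    · intro s hs; rw [List.mem_map] at hs; obtain ⟨t, _, rfl⟩ := hs; exact hao_vals t
    · rcases hkword with h | h
      · left; simp [hao, h]
      · right; rw [List.mem_map]; exact ⟨k, h, by simp [hao]⟩
  intro i j hij hik
  by_cases hjk : j = k
  · subst hjk
    set b : Fin n → S := Function.update ao i z with hb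
    have hbk : b j = z := by
      rw [hb, Function.update_of_ne (Ne.symm hik)]; simp [hao]
    have hb_vals : ∀ t, b t = z ∨ b t = o := by
      intro t
      rcases eq_or_ne t i with rfl | h
      · left; rw [hb, Function.update_self]
      · rw [hb, Function.update_of_ne h]; exact hao_vals t
    have hbo : ∀ t, t ≠ i → t ≠ j → b t = o := by
      intro t h1 h2
      rw [hb, Function.update_of_ne h1]; simp [hao, h2]
    have key : ∀ p q : Fin n, p < q → p ≠ i → p ≠ j → q ≠ i → q ≠ j → f b = z := by
      intro p q hpq hpi hpk hqi hqk
      obtain ⟨v', l', hterm'⟩ := hminor p q hpq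
      have h1 : minor f p q b = f b := by
        show f (Function.update b p (b q)) = f b
        rw [hfixp b p q (by rw [hbo p hpi hpk, hbo q hqi hqk])]
      have h2 : minor f p q ao = f ao := by
        show f (Function.update ao p (ao q)) = f ao
        rw [hfixp ao p q (by simp [hao, hpk, hqk])]
      have hz' : sprod (ao v') (l'.map ao) = z := by rw [← hterm', h2, hfao]
      have hkw' : v' = j ∨ j ∈ l' := by
        by_contra hc
        push_neg at hc
        have ho : sprod (ao v') (l'.map ao) = o := by
          apply sprod_eq_o hz4
          · simp [hao, hc.1]
          · intro s hs
            rw [List.mem_map] at hs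
            obtain ⟨t, ht, rfl⟩ := hs
            have : t ≠ j := fun h => hc.2 (h ▸ ht)
            simp [hao, this]
        rw [hz'] at ho
        exact hzo ho
      rw [← h1, hterm']
      apply sprod_eq_z hz1 hz2 hz3 hz4
      · exact hb_vals v'
      · intro s hs; rw [List.mem_map] at hs; obtain ⟨t, _, rfl⟩ := hs; exact hb_vals t
      · rcases hkw' with h | h
        · left; rw [h]; exact hbk
        · right; rw [List.mem_map]; exact ⟨j, h, hbk⟩
    have hc2 : 1 < (Finset.univ \ ({i, j} : Finset (Fin n))).card := by
      have h1 : ({i, j} : Finset (Fin n)).card ≤ 2 :=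
        (Finset.card_insert_le i {j}).trans (by simp)
      have h2 := Finset.card_sdiff_of_subset (Finset.subset_univ ({i, j} : Finset (Fin n)))
      rw [h2, Finset.card_univ, Fintype.card_fin]
      omega
    obtain ⟨p, hp, q, hq, hpq⟩ := Finset.one_lt_card.mp hc2
    simp only [Finset.mem_sdiff, Finset.mem_univ, true_and, Finset.mem_insert,
      Finset.mem_singleton, not_or] at hp hq
    have hfb : f b = z := by
      rcases (Ne.lt_or_gt hpq) with h | h
      · exact key p q h hp.1 hp.2 hq.1 hq.2
      · exact key q p h hq.1 hq.2 hp.1 hp.2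
    refine ⟨ao, co, fun t ht => by simp [hao, hco, ht], ?_⟩
    have h1 : minor f i j ao = f b := by
      show f (Function.update ao i (ao j)) = f b
      rw [show ao j = z from by simp [hao], hb]
    have h2 : minor f i j co = f co := by
      show f (Function.update co i (co j)) = f co
      rw [show Function.update co i (co j) = co from Function.update_eq_self i co]
    rw [h1, h2, hfb, hfco]
    exact hzo
  · refine ⟨ao, co, fun t ht => by simp [hao, hco, ht], ?_⟩
    have h1 : minor f i j ao = f ao := by
      show f (Function.update ao i (ao j)) = f ao
      rw [hfixp ao i j (by simp [hao, hik, hjk])]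
    have h2 : minor f i j co = f co := by
      show f (Function.update co i (co j)) = f co
      rw [show Function.update co i (co j) = co from Function.update_eq_self i co]
    rw [h1, h2, hfao, hfco]
    exact hzo
end

section
/- Let S be a monoid with at least 2 elements, n > |S| + 1, and let f : S^n → S be a function all of whose identification minors are term functions of the monoid S, and which depends on its i-th argument. Then there exists e_i ≥ 1 such that the unary function x ↦ f(1,...,1,x,1,...,1) (x in position i) equals the function x ↦ x^{e_i}. -/
/-- `f` is an `n`-ary term function of the monoid `S`, i.e. it is induced by a
(possibly empty) word in the variables. -/
def IsMonTermFun {S : Type} [Monoid S] {n : ℕ} (f : (Fin n → S) → S) : Prop :=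
  ∃ t : List (Fin n), ∀ x : Fin n → S, f x = (t.map x).prod

/-- `f` depends on its `k`-th argument. -/
def DependsOnCoord {S : Type} {n : ℕ} (f : (Fin n → S) → S) (k : Fin n) : Prop :=
  ∃ a b : Fin n → S, (∀ j : Fin n, j ≠ k → a j = b j) ∧ f a ≠ f b

lemma prod_if_pow {S : Type} [Monoid S] {n : ℕ} (i : Fin n) (s : S) :
    ∀ u : List (Fin n),
      ((u.map fun j => if j = i then s else 1).prod) = s ^ u.count i := by
  intro u
  induction u with
  | nil => simp
  | cons j u ih =>
    by_cases hj : j = i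
    · subst hj
      simp [List.count_cons, ih, pow_succ']
    · simp [List.count_cons, hj, ih]

/-- Key helper: given a pair of coordinates `k < ℓ` (both ≠ `i`) where the
dependence witnesses take equal values, the minor's word computes everything. -/
theorem stmt_17 (S : Type) [Monoid S] [Fintype S] (hS : 2 ≤ Fintype.card S)
    (n : ℕ) (hn : Fintype.card S + 1 < n) (f : (Fin n → S) → S)
    (hminor : ∀ i j : Fin n, i < j → IsMonTermFun (minor f i j))
    (i : Fin n) (hdep : DependsOnCoord f i) :
    ∃ e : ℕ, 1 ≤ e ∧ ∀ s : S, f (fun j => if j = i then s else 1) = s ^ e := by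
  obtain ⟨a, b, hab, hfab⟩ := hdep
  -- pigeonhole on coordinates ≠ i
  have hcard : Fintype.card S < Fintype.card {j : Fin n // j ≠ i} := by
    have : Fintype.card {j : Fin n // j ≠ i} = n - 1 := by
      simp [Fintype.card_subtype_compl]
    omega
  obtain ⟨⟨k, hk⟩, ⟨l, hl⟩, hne, heq⟩ :=
    Fintype.exists_ne_map_eq_of_card_lt (fun j : {j : Fin n // j ≠ i} => a j.1) hcard
  simp only [ne_eq, Subtype.mk.injEq] at hne heq
  -- WLOG k < l
  obtain ⟨k, l, hk, hl, hkl, heq⟩ :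
      ∃ k l : Fin n, k ≠ i ∧ l ≠ i ∧ k < l ∧ a k = a l := by
    rcases lt_trichotomy k l with h | h | h
    · exact ⟨k, l, hk, hl, h, heq⟩
    · exact absurd h hne
    · exact ⟨l, k, hl, hk, h, heq.symm⟩
  obtain ⟨u, hu⟩ := hminor k l hkl
  -- the minor agrees with f at points where coords k and l coincide
  have eval : ∀ c : Fin n → S, c k = c l → f c = (u.map c).prod := by
    intro c hc
    have : minor f k l c = f c := by
      unfold minor
      rw [← hc, Function.update_eq_self]
    rw [← this, hu]
  have hfa : f a = (u.map a).prod := eval a heq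
  have hfb : f b = (u.map b).prod := by
    refine eval b ?_
    rw [← hab k hk, ← hab l hl, heq]
  -- i must occur in u
  have hiu : i ∈ u := by
    by_contra hiu
    apply hfab
    rw [hfa, hfb]
    congr 1
    refine List.map_congr_left fun j hj => hab j ?_
    rintro rfl; exact hiu hj
  refine ⟨u.count i, List.one_le_count_iff.mpr hiu, fun s => ?_⟩
  have := eval (fun j => if j = i then s else 1) (by simp [hk, hl])
  rw [this, prod_if_pow]
end
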